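/- Theorem 4(i) (Top-K α-re-identifiability): Let m ≥ 1 (m = α·n₁, the number of overlapping anonymized users), n₂ ≥ 2 and 1 ≤ K < n₂ be integers. For each u ∈ {1, …, m} let X_u have values in [θl, θu] with mean λ, and let {Y_{u,v}}_{v ∈ V_u} be a family of size n₂ − 1 with values in [θ̄l, θ̄u] and mean λ̄. If λ < λ̄, then P(for every u, #{v ∈ V_u : Y_{u,v} ≤ X_u} ≤ K − 1) ≥ 1 − exp(ln(2·α·n₁·(n₂ − K)) − (λ − λ̄)²/(4δ²)) = 1 − 2·m·(n₂ − K)·exp(−(λ − λ̄)²/(4δ²)); on this event every overlapping user's true mapping lies in its Top-K candidate set, i.e., Δ₁ is Top-K α-re-identifiable. Symmetrically, if λ > λ̄, the same lower bound holds for P(for every u, #{v ∈ V_u : Y_{u,v} ≥ X_u} ≤ K − 1). -/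

import Mathlib

open MeasureTheory ENNReal

lemma exp_le_one_add_four {r : ℝ} (h0 : 0 ≤ r) (h1 : r ≤ 1) :
    Real.exp r ≤ 1 + 4 * r := by
  rcases le_or_gt r (3/4) with h | h
  · have h2 : 1 - r ≤ Real.exp (-r) := by linarith [Real.add_one_le_exp (-r)]
    have h3 : Real.exp r * Real.exp (-r) = 1 := by rw [← Real.exp_add]; simp
    nlinarith [Real.exp_pos r, Real.exp_pos (-r)]
  · have h2 := Real.exp_one_lt_d9
    have h3 : Real.exp r ≤ Real.exp 1 := Real.exp_le_exp.2 h1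
    nlinarith

lemma cantelli_to_exp (w s δ : ℝ) (hw : 0 < w) (hs : 0 < s) (hsw : s ≤ w) (hδ : w ≤ δ) :
    (w^2/4) / (w^2/4 + s^2) ≤ Real.exp (-s^2 / δ^2) := by
  have hδ0 : 0 < δ := lt_of_lt_of_le hw hδ
  set r := s^2 / δ^2 with hr
  have hr0 : 0 < r := by positivity
  have hr1 : r ≤ 1 := by
    rw [hr, div_le_one (by positivity)]
    nlinarith
  have hexp : Real.exp r ≤ 1 + 4 * r := exp_le_one_add_four hr0.le hr1
  have h4 : 4 * (w^2/4) * r ≤ s ^ 2 := by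
    have hδ2 : w^2 ≤ δ^2 := by nlinarith
    rw [hr]
    calc 4 * (w^2 / 4) * (s^2 / δ^2) = w^2 * (s^2 / δ^2) := by ring
      _ ≤ δ^2 * (s^2 / δ^2) := mul_le_mul_of_nonneg_right hδ2 (by positivity)
      _ = s^2 := by field_simp
  have h1 : (w^2/4) / (w^2/4 + s^2) ≤ 1 / (1 + 4 * r) := by
    rw [div_le_div_iff₀ (by positivity) (by positivity)]
    nlinarith
  have h2 : 1 / (1 + 4 * r) ≤ Real.exp (-r) := by
    rw [Real.exp_neg, one_div]
    exact inv_anti₀ (Real.exp_pos r) hexp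
  have h3 : -s^2 / δ^2 = -r := by rw [hr]; ring
  rw [h3]
  exact le_trans h1 h2

lemma tail_bound {Ω : Type*} [MeasurableSpace Ω] (P : Measure Ω) [IsProbabilityMeasure P]
    (Z : Ω → ℝ) (hZm : Measurable Z) (a b : ℝ) (hZr : ∀ ω, Z ω ∈ Set.Icc a b)
    (hab : 0 < b - a) (δ : ℝ) (hδ : b - a ≤ δ) (s : ℝ) (hs : 0 < s) :
    (P {ω | (∫ ω, Z ω ∂P) + s ≤ Z ω}).toReal ≤ Real.exp (-s^2 / δ^2) := by
  have hδ0 : 0 < δ := lt_of_lt_of_le hab hδ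
  set μZ := ∫ ω, Z ω ∂P with hμZ
  have hZint : Integrable Z P := by
    refine Integrable.mono' (integrable_const (max |a| |b|)) hZm.aestronglyMeasurable ?_
    filter_upwards with ω
    rcases hZr ω with ⟨h1, h2⟩
    rw [Real.norm_eq_abs, abs_le]
    constructor
    · exact le_trans (neg_le_neg (le_max_left _ _)) (by nlinarith [abs_nonneg a, neg_abs_le a])
    · exact le_trans h2 (le_trans (le_abs_self b) (le_max_right _ _))
  have hconst : ∀ c : ℝ, (∫ _ : Ω, c ∂P) = c := by intro c; simp
  have hμa : a ≤ μZ := by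
    rw [hμZ, ← hconst a]
    exact integral_mono (integrable_const a) hZint fun ω => (hZr ω).1
  have hμb : μZ ≤ b := by
    rw [hμZ, ← hconst b]
    exact integral_mono hZint (integrable_const b) fun ω => (hZr ω).2
  rcases lt_or_ge (b - a) s with hcase | hcase
  · have hempty : {ω | μZ + s ≤ Z ω} = (∅ : Set Ω) := by
      ext ω
      simp only [Set.mem_setOf_eq, Set.mem_empty_iff_false, iff_false, not_le]
      have := (hZr ω).2
      linarith
    rw [hempty]
    simp only [measure_empty, ENNReal.toReal_zero]
    positivity
  · -- Cantelli
    set c := (a + b) / 2 with hc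
    clear_value c
    set v := (b - a)^2 / 4 with hv
    clear_value v
    have hvpos : 0 < v := by rw [hv]; positivity
    set t := v / s with ht
    clear_value t
    have htpos : 0 < t := by rw [ht]; positivity
    set f := fun ω => (Z ω - μZ + t)^2 with hf
    clear_value f
    have hZc_int : Integrable (fun ω => Z ω - c) P := hZint.sub (integrable_const c)
    have hZc2_int : Integrable (fun ω => (Z ω - c)^2) P := by
      refine Integrable.mono' (integrable_const v)
        ((hZm.sub measurable_const).pow_const 2).aestronglyMeasurable ?_
      filter_upwards with ω
      rw [Real.norm_eq_abs, abs_of_nonneg (by positivity)]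
      rcases hZr ω with ⟨h1, h2⟩
      rw [hv, hc]; nlinarith
    have hIZc : (∫ ω, (Z ω - c) ∂P) = μZ - c := by
      rw [integral_sub hZint (integrable_const c), hconst]
    set e := c - μZ + t with he
    clear_value e
    have hg_int : Integrable (fun ω => 2 * e * (Z ω - c) + e^2) P :=
      (hZc_int.const_mul (2 * e)).add (integrable_const _)
    have hfeq : f = fun ω => (Z ω - c)^2 + (2 * e * (Z ω - c) + e^2) := by
      funext ω; rw [hf]; dsimp only; rw [he]; ring
    have hfint : Integrable f P := by rw [hfeq]; exact hZc2_int.add hg_int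
    have hIf : (∫ ω, f ω ∂P) ≤ v + t^2 := by
      have hI1 : (∫ ω, f ω ∂P)
          = (∫ ω, (Z ω - c)^2 ∂P) + (2 * e * (μZ - c) + e^2) := by
        rw [hfeq]
        rw [integral_add hZc2_int hg_int,
          integral_add (hZc_int.const_mul (2 * e)) (integrable_const _),
          integral_const_mul, hIZc, hconst]
      rw [hI1]
      have h1 : (∫ ω, (Z ω - c)^2 ∂P) ≤ v := by
        rw [← hconst v]
        refine integral_mono hZc2_int (integrable_const v) fun ω => ?_
        rcases hZr ω with ⟨ha1, hb1⟩
        rw [hv, hc]; nlinarith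
      have h2 : 2 * e * (μZ - c) + e^2 ≤ t^2 := by
        rw [he]; nlinarith [sq_nonneg (μZ - c)]
      linarith
    have hmarkov := mul_meas_ge_le_integral_of_nonneg (f := f) (μ := P)
      (Filter.Eventually.of_forall fun ω => by rw [hf]; positivity) hfint ((s + t)^2)
    have hsub : {ω | μZ + s ≤ Z ω} ⊆ {ω | (s + t)^2 ≤ f ω} := by
      intro ω hω
      simp only [Set.mem_setOf_eq] at hω ⊢
      rw [hf]
      have h1 : s + t ≤ Z ω - μZ + t := by linarith
      exact pow_le_pow_left₀ (by positivity) h1 2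
    have hmono : (P {ω | μZ + s ≤ Z ω}).toReal ≤ (P {ω | (s + t)^2 ≤ f ω}).toReal :=
      ENNReal.toReal_mono (measure_ne_top _ _) (measure_mono hsub)
    have hst : (0:ℝ) < (s + t)^2 := by positivity
    have hP2 : (P {ω | (s + t)^2 ≤ f ω}).toReal ≤ (v + t^2) / (s + t)^2 := by
      rw [le_div_iff₀ hst]
      calc (P {ω | (s + t)^2 ≤ f ω}).toReal * (s + t)^2
          = (s + t)^2 * (P {x | (s + t)^2 ≤ f x}).toReal := by ring
        _ ≤ ∫ ω, f ω ∂P := hmarkov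
        _ ≤ v + t^2 := hIf
    have hts : t * s = v := by rw [ht]; field_simp
    have hkey : (v + t^2) / (s + t)^2 = v / (v + s^2) := by
      rw [div_eq_div_iff (by positivity) (by positivity)]
      linear_combination (t * s - v) * hts
    have hfinal : v / (v + s^2) ≤ Real.exp (-s^2 / δ^2) := by
      rw [hv]
      exact cantelli_to_exp (b - a) s δ hab hs hcase hδ
    calc (P {ω | μZ + s ≤ Z ω}).toReal ≤ (v + t^2) / (s + t)^2 := le_trans hmono hP2
      _ = v / (v + s^2) := hkey
      _ ≤ _ := hfinal

lemma pair_bound {Ω : Type*} [MeasurableSpace Ω] (P : Measure Ω) [IsProbabilityMeasure P]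
    (Z W : Ω → ℝ) (hZm : Measurable Z) (hWm : Measurable W)
    (a b c d : ℝ) (hZr : ∀ ω, Z ω ∈ Set.Icc a b) (hWr : ∀ ω, W ω ∈ Set.Icc c d)
    (hba : 0 < b - a) (hdc : 0 < d - c) (δ : ℝ) (hδ1 : b - a ≤ δ) (hδ2 : d - c ≤ δ)
    (hμ : (∫ ω, Z ω ∂P) < ∫ ω, W ω ∂P) :
    (P {ω | W ω ≤ Z ω}).toReal ≤
      2 * Real.exp (-((∫ ω, Z ω ∂P) - ∫ ω, W ω ∂P)^2 / (4 * δ^2)) := by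
  set μ1 := ∫ ω, Z ω ∂P with hμ1
  set μ2 := ∫ ω, W ω ∂P with hμ2
  set s := (μ2 - μ1) / 2 with hs
  have hspos : 0 < s := by rw [hs]; linarith
  have hInegW : (∫ ω, (-W ω) ∂P) = -μ2 := by rw [integral_neg]
  set A1 := {ω | μ1 + s ≤ Z ω} with hA1
  set A2 := {ω | (∫ ω, (-W ω) ∂P) + s ≤ -W ω} with hA2
  have hsub : {ω | W ω ≤ Z ω} ⊆ A1 ∪ A2 := by
    intro ω hω
    simp only [Set.mem_setOf_eq] at hω
    by_contra hcon
    simp only [Set.mem_union, hA1, hA2, Set.mem_setOf_eq, not_or, not_le, hInegW] at hcon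
    obtain ⟨h1, h2⟩ := hcon
    have : μ2 - s < W ω := by linarith
    have : μ1 + s = μ2 - s := by rw [hs]; ring
    linarith
  have hT1 : (P A1).toReal ≤ Real.exp (-s^2 / δ^2) :=
    tail_bound P Z hZm a b hZr hba δ hδ1 s hspos
  have hT2 : (P A2).toReal ≤ Real.exp (-s^2 / δ^2) := by
    refine tail_bound P (fun ω => -W ω) hWm.neg (-d) (-c) (fun ω => ?_)
      (by linarith) δ (by linarith) s hspos
    rcases hWr ω with ⟨h1, h2⟩
    simp only [Set.mem_Icc]
    constructor <;> simp only [neg_le_neg_iff] <;> linarith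
  have hUnion : (P {ω | W ω ≤ Z ω}).toReal ≤ (P A1).toReal + (P A2).toReal := by
    have h1 : P {ω | W ω ≤ Z ω} ≤ P A1 + P A2 :=
      le_trans (measure_mono hsub) (measure_union_le A1 A2)
    have h2 := ENNReal.toReal_mono
      (by simp [ENNReal.add_ne_top, measure_ne_top]) h1
    rwa [ENNReal.toReal_add (measure_ne_top _ _) (measure_ne_top _ _)] at h2
  have hexp : Real.exp (-s^2 / δ^2) = Real.exp (-(μ1 - μ2)^2 / (4 * δ^2)) := by
    congr 1
    rw [hs]
    ring
  calc (P {ω | W ω ≤ Z ω}).toReal ≤ (P A1).toReal + (P A2).toReal := hUnion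
    _ ≤ 2 * Real.exp (-s^2 / δ^2) := by linarith
    _ = 2 * Real.exp (-(μ1 - μ2)^2 / (4 * δ^2)) := by rw [hexp]

lemma union_piece {Ω : Type*} [MeasurableSpace Ω] (P : Measure Ω) [IsProbabilityMeasure P]
    (m n₂ K : ℕ) (hK : 1 ≤ K) (hKn₂ : K < n₂)
    (V : Fin m → Type*) [∀ u, Fintype (V u)] (hV : ∀ u, Fintype.card (V u) = n₂ - 1)
    (A : ∀ u : Fin m, V u → Set Ω) (hAm : ∀ u v, MeasurableSet (A u v))
    (E : ℝ) (hE : 0 ≤ E) (hA : ∀ u v, (P (A u v)).toReal ≤ E) :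
    1 - m * ((n₂ : ℝ) - K) * E ≤
      (P {ω | ∀ u, {v : V u | ω ∈ A u v}.ncard ≤ K - 1}).toReal := by
  classical
  have hSK : ∀ u : Fin m, ∃ S : Finset (V u), S ⊆ Finset.univ ∧ S.card = n₂ - K := by
    intro u
    refine Finset.exists_subset_card_eq (s := Finset.univ) (n := n₂ - K) ?_
    rw [Finset.card_univ, hV u]
    omega
  choose S hS hScard using hSK
  set U : Set Ω := ⋃ u, ⋃ v ∈ S u, A u v with hU
  have hUm : MeasurableSet U :=
    MeasurableSet.iUnion fun u => (S u).measurableSet_biUnion fun v _ => hAm u v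
  have hsub : Uᶜ ⊆ {ω | ∀ u, {v : V u | ω ∈ A u v}.ncard ≤ K - 1} := by
    intro ω hω u
    rw [Set.mem_compl_iff] at hω
    by_contra hcon
    push_neg at hcon
    have hKle : K ≤ {v : V u | ω ∈ A u v}.ncard := by omega
    set T : Set (V u) := {v : V u | ω ∈ A u v} with hT
    have hTfin : T.Finite := Set.toFinite T
    rw [Set.ncard_eq_toFinset_card T hTfin] at hKle
    have hdisj : hTfin.toFinset ⊆ Finset.univ \ S u := by
      intro v hv
      rw [Set.Finite.mem_toFinset] at hv
      refine Finset.mem_sdiff.2 ⟨Finset.mem_univ v, fun hvS => hω ?_⟩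
      rw [hU]
      exact Set.mem_iUnion.2 ⟨u, Set.mem_iUnion₂.2 ⟨v, hvS, hv⟩⟩
    have hcard := Finset.card_le_card hdisj
    rw [Finset.card_sdiff_of_subset (Finset.subset_univ _), Finset.card_univ, hV u, hScard u] at hcard
    omega
  have hAb : ∀ u v, P (A u v) ≤ ENNReal.ofReal E := by
    intro u v
    rw [← ENNReal.ofReal_toReal (measure_ne_top P (A u v))]
    exact ENNReal.ofReal_le_ofReal (hA u v)
  have hPU : P U ≤ (m * (n₂ - K) : ℕ) * ENNReal.ofReal E := by
    calc P U ≤ ∑' u : Fin m, P (⋃ v ∈ S u, A u v) := measure_iUnion_le _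
      _ = ∑ u : Fin m, P (⋃ v ∈ S u, A u v) := tsum_fintype _
      _ ≤ ∑ u : Fin m, ∑ v ∈ S u, P (A u v) :=
          Finset.sum_le_sum fun u _ => measure_biUnion_finset_le (S u) (A u)
      _ ≤ ∑ u : Fin m, ∑ v ∈ S u, ENNReal.ofReal E :=
          Finset.sum_le_sum fun u _ => Finset.sum_le_sum fun v _ => hAb u v
      _ = ∑ u : Fin m, ((n₂ - K : ℕ) : ℝ≥0∞) * ENNReal.ofReal E := by
          refine Finset.sum_congr rfl fun u _ => ?_
          rw [Finset.sum_const, hScard u, nsmul_eq_mul]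
      _ = (m * (n₂ - K) : ℕ) * ENNReal.ofReal E := by
          rw [Finset.sum_const, Finset.card_univ, Fintype.card_fin, nsmul_eq_mul]
          push_cast
          ring
  have hPUr : (P U).toReal ≤ (m : ℝ) * ((n₂ : ℝ) - K) * E := by
    have h1 := ENNReal.toReal_mono (by finiteness) hPU
    rw [ENNReal.toReal_mul, ENNReal.toReal_natCast, ENNReal.toReal_ofReal hE] at h1
    have h2 : ((m * (n₂ - K) : ℕ) : ℝ) = (m : ℝ) * ((n₂ : ℝ) - K) := by
      push_cast [Nat.cast_sub hKn₂.le]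
      ring
    rwa [h2] at h1
  have hcompl : (P Uᶜ).toReal = 1 - (P U).toReal := by
    rw [measure_compl hUm (measure_ne_top _ _), measure_univ]
    rw [ENNReal.toReal_sub_of_le prob_le_one (by simp)]
    simp
  calc 1 - (m : ℝ) * ((n₂ : ℝ) - K) * E ≤ 1 - (P U).toReal := by linarith
    _ = (P Uᶜ).toReal := hcompl.symm
    _ ≤ _ := ENNReal.toReal_mono (measure_ne_top _ _) (measure_mono hsub)


/-- Theorem 4(i) (Top-K α-re-identifiability): with `m = α·n₁` overlapping
anonymized users, each with `n₂ - 1` wrong candidates, the event that every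
overlapping user's true mapping lies in its Top-K candidate set (i.e. `Δ₁` is
Top-K α-re-identifiable) has probability at least
`1 - 2 m (n₂ - K) exp(-(λ - λ̄)²/(4δ²))`. -/
theorem theorem4_topK_alpha
    {Ω : Type*} [MeasurableSpace Ω] (P : Measure Ω) [IsProbabilityMeasure P]
    (m : ℕ) (hm : 1 ≤ m)
    (n₂ K : ℕ) (hn₂ : 2 ≤ n₂) (hK : 1 ≤ K) (hKn₂ : K < n₂)
    (V : Fin m → Type*) [∀ u, Fintype (V u)]
    (hV : ∀ u, Fintype.card (V u) = n₂ - 1)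
    (X : Fin m → Ω → ℝ) (Y : ∀ u : Fin m, V u → Ω → ℝ)
    (hXm : ∀ u, Measurable (X u)) (hYm : ∀ u v, Measurable (Y u v))
    (θl θu θbl θbu lam lamb θ θb δ : ℝ)
    (hXr : ∀ u ω, X u ω ∈ Set.Icc θl θu)
    (hYr : ∀ u v ω, Y u v ω ∈ Set.Icc θbl θbu)
    (hlam : ∀ u, lam = ∫ ω, X u ω ∂P)
    (hlamb : ∀ u v, lamb = ∫ ω, Y u v ω ∂P)
    (hθ : θ = θu - θl) (hθb : θb = θbu - θbl) (hδ : δ = max θ θb)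
    (hθpos : 0 < θ) (hθbpos : 0 < θb) :
    (lam < lamb →
      1 - 2 * m * ((n₂ : ℝ) - K) *
          Real.exp (-(lam - lamb) ^ 2 / (4 * δ ^ 2)) ≤
        (P {ω | ∀ u, {v : V u | Y u v ω ≤ X u ω}.ncard ≤ K - 1}).toReal) ∧
    (lamb < lam →
      1 - 2 * m * ((n₂ : ℝ) - K) *
          Real.exp (-(lam - lamb) ^ 2 / (4 * δ ^ 2)) ≤
        (P {ω | ∀ u, {v : V u | X u ω ≤ Y u v ω}.ncard ≤ K - 1}).toReal) := by
  have hθδ : θu - θl ≤ δ := by rw [hδ, ← hθ]; exact le_max_left _ _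
  have hθbδ : θbu - θbl ≤ δ := by rw [hδ, ← hθb]; exact le_max_right _ _
  have hθ0 : 0 < θu - θl := hθ ▸ hθpos
  have hθb0 : 0 < θbu - θbl := hθb ▸ hθbpos
  set E : ℝ := 2 * Real.exp (-(lam - lamb) ^ 2 / (4 * δ ^ 2)) with hE
  have hE0 : 0 ≤ E := by rw [hE]; positivity
  constructor
  · intro h
    have hA : ∀ u v, (P {ω | Y u v ω ≤ X u ω}).toReal ≤ E := by
      intro u v
      have hμ : (∫ ω, X u ω ∂P) < ∫ ω, Y u v ω ∂P := by
        rw [← hlam u, ← hlamb u v]; exact h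
      have := pair_bound P (X u) (Y u v) (hXm u) (hYm u v) θl θu θbl θbu
        (hXr u) (hYr u v) hθ0 hθb0 δ hθδ hθbδ hμ
      rw [← hlam u, ← hlamb u v] at this
      exact this
    have hmain := union_piece P m n₂ K hK hKn₂ V hV
      (fun u v => {ω | Y u v ω ≤ X u ω})
      (fun u v => measurableSet_le (hYm u v) (hXm u)) E hE0 hA
    simp only [Set.mem_setOf_eq] at hmain
    have heq : 2 * (m : ℝ) * ((n₂ : ℝ) - K) * Real.exp (-(lam - lamb) ^ 2 / (4 * δ ^ 2))
        = (m : ℝ) * ((n₂ : ℝ) - K) * E := by rw [hE]; ring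
    rw [heq]
    exact hmain
  · intro h
    have hA : ∀ u v, (P {ω | X u ω ≤ Y u v ω}).toReal ≤ E := by
      intro u v
      have hμ : (∫ ω, Y u v ω ∂P) < ∫ ω, X u ω ∂P := by
        rw [← hlam u, ← hlamb u v]; exact h
      have := pair_bound P (Y u v) (X u) (hYm u v) (hXm u) θbl θbu θl θu
        (hYr u v) (hXr u) hθb0 hθ0 δ hθbδ hθδ hμ
      rw [← hlam u, ← hlamb u v] at this
      have hexp : Real.exp (-(lamb - lam) ^ 2 / (4 * δ ^ 2))
          = Real.exp (-(lam - lamb) ^ 2 / (4 * δ ^ 2)) := by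
        congr 1; ring
      rw [hE, ← hexp]
      exact this
    have hmain := union_piece P m n₂ K hK hKn₂ V hV
      (fun u v => {ω | X u ω ≤ Y u v ω})
      (fun u v => measurableSet_le (hXm u) (hYm u v)) E hE0 hA
    simp only [Set.mem_setOf_eq] at hmain
    have heq : 2 * (m : ℝ) * ((n₂ : ℝ) - K) * Real.exp (-(lam - lamb) ^ 2 / (4 * δ ^ 2))
        = (m : ℝ) * ((n₂ : ℝ) - K) * E := by rw [hE]; ring
    rw [heq]
    exact hmain
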